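/- arXiv:1312.5436 — 2 statements merged into one kernel-verified Lean document; each statement's English description precedes it below -/
import Mathlib

section
/- Let L be a finite collection of lines in R^3 and let x be a joint of multiplicity N for L such that at most 2k lines of L pass through x. Then for every plane H containing x, there exist at least N/(1000·k^2) lines of L passing through x that do not lie in H. -/
attribute [local instance] Classical.propDecidable

/-- `x` lies on the line given by the (point, direction) pair `l`. -/
def onLine (x : Fin 3 → ℝ) (l : (Fin 3 → ℝ) × (Fin 3 → ℝ)) : Prop :=
  ∃ t : ℝ, x = l.1 + t • l.2

/-- The lines of the collection `L` passing through `x`. -/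
noncomputable def linesThrough (L : Finset ((Fin 3 → ℝ) × (Fin 3 → ℝ))) (x : Fin 3 → ℝ) :
    Finset ((Fin 3 → ℝ) × (Fin 3 → ℝ)) :=
  L.filter (fun l => onLine x l)

/-- The multiplicity of `x` as a joint for `L`: the number of unordered triples of lines
of `L` through `x` whose directions span `ℝ³`. -/
noncomputable def jointMult (L : Finset ((Fin 3 → ℝ) × (Fin 3 → ℝ))) (x : Fin 3 → ℝ) : ℕ :=
  ((Finset.powersetCard 3 (linesThrough L x)).filter
    (fun T => Submodule.span ℝ ((T.image Prod.snd : Finset (Fin 3 → ℝ)) : Set (Fin 3 → ℝ)) = ⊤)).card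

/-- The plane through `x₀` with normal vector `nv`. -/
def planeThrough (x₀ nv : Fin 3 → ℝ) : Set (Fin 3 → ℝ) :=
  {y | ∑ i, nv i * (y i - x₀ i) = 0}

theorem stmt1 (L : Finset ((Fin 3 → ℝ) × (Fin 3 → ℝ)))
    (hL : ∀ l ∈ L, l.2 ≠ 0)
    (x : Fin 3 → ℝ) (N k : ℕ)
    (hN : jointMult L x = N) (hjoint : 1 ≤ N)
    (hk : (linesThrough L x).card ≤ 2 * k)
    (nv : Fin 3 → ℝ) (hnv : nv ≠ 0) :
    N ≤ 1000 * k ^ 2 *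
      ((linesThrough L x).filter
        (fun l => ¬ ({y | onLine y l} ⊆ planeThrough x nv))).card := by
  rw [jointMult] at hN
  set S := linesThrough L x with hS
  set B := S.filter (fun l => ¬ ({y | onLine y l} ⊆ planeThrough x nv)) with hB
  set P := (Finset.powersetCard 3 S).filter
    (fun T => Submodule.span ℝ ((T.image Prod.snd : Finset (Fin 3 → ℝ)) : Set (Fin 3 → ℝ)) = ⊤)
    with hP
  -- the linear functional with kernel the plane directions
  set φ : (Fin 3 → ℝ) →ₗ[ℝ] ℝ := ∑ i, nv i • LinearMap.proj i with hφ
  have hφ_apply : ∀ v : Fin 3 → ℝ, φ v = ∑ i, nv i * v i := by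
    intro v
    simp [hφ]
  have hφnv : φ nv ≠ 0 := by
    rw [hφ_apply]
    intro h
    apply hnv
    funext i
    rw [Finset.sum_eq_zero_iff_of_nonneg (fun i _ => mul_self_nonneg (nv i))] at h
    exact mul_self_eq_zero.mp (h i (Finset.mem_univ i))
  -- every spanning triple contains a line not contained in the plane
  have key : ∀ T ∈ P, ∃ l ∈ B, l ∈ T := by
    intro T hT
    rw [hP, Finset.mem_filter, Finset.mem_powersetCard] at hT
    obtain ⟨⟨hTS, _⟩, hspan⟩ := hT
    by_contra hcon
    push_neg at hcon
    have hker : Submodule.span ℝ ((T.image Prod.snd : Finset (Fin 3 → ℝ)) : Set (Fin 3 → ℝ)) ≤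
        LinearMap.ker φ := by
      rw [Submodule.span_le]
      intro v hv
      simp only [Finset.coe_image, Set.mem_image, Finset.mem_coe] at hv
      obtain ⟨l, hlT, rfl⟩ := hv
      have hlS : l ∈ S := hTS hlT
      have hsub : {y | onLine y l} ⊆ planeThrough x nv := by
        by_contra hns
        exact hcon l (Finset.mem_filter.mpr ⟨hlS, hns⟩) hlT
      have h1 : l.1 ∈ planeThrough x nv := hsub ⟨0, by simp⟩
      have h2 : l.1 + l.2 ∈ planeThrough x nv := hsub ⟨1, by simp⟩
      simp only [planeThrough, Set.mem_setOf_eq] at h1 h2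
      rw [SetLike.mem_coe, LinearMap.mem_ker, hφ_apply]
      have hsum : ∑ i, nv i * ((l.1 + l.2) i - x i) - ∑ i, nv i * (l.1 i - x i) = 0 := by
        rw [h1, h2]; ring
      rw [← Finset.sum_sub_distrib] at hsum
      calc ∑ i, nv i * l.2 i
          = ∑ i, (nv i * ((l.1 + l.2) i - x i) - nv i * (l.1 i - x i)) := by
            apply Finset.sum_congr rfl
            intro i _
            simp only [Pi.add_apply]
            ring
        _ = 0 := hsum
    rw [hspan, top_le_iff] at hker
    exact hφnv (by rw [← LinearMap.mem_ker, hker]; exact Submodule.mem_top)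
  -- counting
  have hsubset : P ⊆ B.biUnion (fun l => P.filter (fun T => l ∈ T)) := by
    intro T hT
    obtain ⟨l, hlB, hlT⟩ := key T hT
    exact Finset.mem_biUnion.mpr ⟨l, hlB, Finset.mem_filter.mpr ⟨hT, hlT⟩⟩
  have hbound : ∀ l ∈ B, (P.filter (fun T => l ∈ T)).card ≤ 4 * k ^ 2 := by
    intro l _
    have hinj : (P.filter (fun T => l ∈ T)).card ≤ (Finset.powersetCard 2 (S.erase l)).card := by
      apply Finset.card_le_card_of_injOn (fun T => T.erase l)
      · intro T hT
        rw [Finset.mem_coe, Finset.mem_filter] at hT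
        obtain ⟨hTP, hlT⟩ := hT
        rw [hP, Finset.mem_filter, Finset.mem_powersetCard] at hTP
        obtain ⟨⟨hTS, hT3⟩, _⟩ := hTP
        rw [Finset.mem_coe, Finset.mem_powersetCard]
        constructor
        · intro y hy
          rw [Finset.mem_erase] at hy ⊢
          exact ⟨hy.1, hTS hy.2⟩
        · rw [Finset.card_erase_of_mem hlT, hT3]
      · intro T hT T' hT' h
        rw [Finset.mem_coe, Finset.mem_filter] at hT hT'
        have h' := congrArg (insert l) h
        rwa [Finset.insert_erase hT.2, Finset.insert_erase hT'.2] at h'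
    rw [Finset.card_powersetCard] at hinj
    refine hinj.trans ?_
    have hn : (S.erase l).card ≤ 2 * k := (Finset.card_erase_le).trans hk
    calc (S.erase l).card.choose 2
        = (S.erase l).card * ((S.erase l).card - 1) / 2 := Nat.choose_two_right _
      _ ≤ (S.erase l).card * ((S.erase l).card - 1) := Nat.div_le_self _ _
      _ ≤ (2 * k) * (2 * k) := Nat.mul_le_mul hn ((Nat.sub_le _ 1).trans hn)
      _ = 4 * k ^ 2 := by ring
  have hmain : P.card ≤ B.card * (4 * k ^ 2) := by
    calc P.card ≤ (B.biUnion (fun l => P.filter (fun T => l ∈ T))).card :=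
          Finset.card_le_card hsubset
      _ ≤ ∑ l ∈ B, (P.filter (fun T => l ∈ T)).card := Finset.card_biUnion_le
      _ ≤ ∑ _l ∈ B, 4 * k ^ 2 := Finset.sum_le_sum hbound
      _ = B.card * (4 * k ^ 2) := by rw [Finset.sum_const, smul_eq_mul]
  rw [← hN]
  calc P.card ≤ B.card * (4 * k ^ 2) := hmain
    _ ≤ B.card * (1000 * k ^ 2) := by
        exact Nat.mul_le_mul_left _ (Nat.mul_le_mul_right _ (by norm_num))
    _ = 1000 * k ^ 2 * B.card := Nat.mul_comm _ _
end

section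
/- Let L be a finite collection of L lines in R^n (n ≥ 2) and J the set of joints formed by L. Then |J| ≤ c_n·L^{n/(n-1)}, where c_n depends only on n. -/
/-- A subset of `ℝⁿ` which is an (affine) line. -/
def IsLine {n : ℕ} (l : Set (Fin n → ℝ)) : Prop :=
  ∃ v b : Fin n → ℝ, b ≠ 0 ∧ l = {x | ∃ t : ℝ, x = v + t • b}

/-- The set of joints of a collection of lines: points such that the directions of the
lines of the collection through the point span `ℝⁿ`. -/
def jointSet {n : ℕ} (L : Finset (Set (Fin n → ℝ))) : Set (Fin n → ℝ) :=
  {x | Submodule.span ℝ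
    {b : Fin n → ℝ | b ≠ 0 ∧ ∃ l ∈ L, x ∈ l ∧ ∃ v, l = {y | ∃ t : ℝ, y = v + t • b}} = ⊤}

open MvPolynomial
open scoped Classical

variable {n : ℕ}

lemma coeff_pderiv (i : Fin n) (m : Fin n →₀ ℕ) (f : MvPolynomial (Fin n) ℝ) :
    coeff m (pderiv i f) = ((m i : ℝ) + 1) * coeff (m + Finsupp.single i 1) f := by
  induction f using MvPolynomial.induction_on' with
  | monomial s a =>
    rw [pderiv_monomial, coeff_monomial, coeff_monomial]
    by_cases h : s = m + Finsupp.single i 1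
    · subst h
      have h1 : m + Finsupp.single i 1 - Finsupp.single i 1 = m := by
        ext j
        rw [Finsupp.tsub_apply, Finsupp.add_apply]
        omega
      rw [if_pos h1, if_pos rfl, Finsupp.add_apply, Finsupp.single_eq_same]
      push_cast; ring
    · rw [if_neg h]
      by_cases h2 : s - Finsupp.single i 1 = m
      · have hsi : s i = 0 := by
          by_contra hsi
          apply h
          ext j
          have hj2 := congrFun (congrArg DFunLike.coe h2) j
          rw [Finsupp.tsub_apply] at hj2
          rw [Finsupp.add_apply]
          by_cases hj : j = i
          · subst hj
            rw [Finsupp.single_eq_same] at hj2 ⊢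
            omega
          · rw [Finsupp.single_eq_of_ne' (Ne.symm hj)] at hj2 ⊢
            omega
        rw [if_pos h2, hsi]; simp
      · rw [if_neg h2, mul_zero]
  | add p q hp hq => simp [hp, hq]; ring

lemma sum_add_single (i : Fin n) (m : Fin n →₀ ℕ) :
    (m + Finsupp.single i 1).sum (fun _ e => e) = m.sum (fun _ e => e) + 1 := by
  rw [Finsupp.sum_add_index' (fun _ => rfl) (fun _ _ _ => rfl), Finsupp.sum_single_index rfl]

lemma totalDegree_pderiv_le (i : Fin n) (f : MvPolynomial (Fin n) ℝ) {d : ℕ}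
    (hf : f.totalDegree ≤ d + 1) : (pderiv i f).totalDegree ≤ d := by
  apply Finset.sup_le
  intro m hm
  rw [mem_support_iff, coeff_pderiv] at hm
  have h2 : coeff (m + Finsupp.single i 1) f ≠ 0 := by
    intro h; rw [h, mul_zero] at hm; exact hm rfl
  have := MvPolynomial.le_totalDegree (mem_support_iff.mpr h2)
  rw [sum_add_single] at this
  omega

lemma eq_C_of_pderiv_eq_zero {f : MvPolynomial (Fin n) ℝ}
    (h : ∀ i, pderiv i f = 0) : f = C (coeff 0 f) := by
  ext m
  by_cases hm : m = 0
  · subst hm; simp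
  · rw [coeff_C, if_neg (Ne.symm hm)]
    obtain ⟨i, hi⟩ : ∃ i, m i ≠ 0 := by
      by_contra hc; push_neg at hc; exact hm (Finsupp.ext hc)
    have hm' : m - Finsupp.single i 1 + Finsupp.single i 1 = m := by
      ext j
      rw [Finsupp.add_apply, Finsupp.tsub_apply]
      by_cases hj : j = i
      · subst hj; rw [Finsupp.single_eq_same]; omega
      · rw [Finsupp.single_eq_of_ne' (Ne.symm hj)]; omega
    have h3 := coeff_pderiv i (m - Finsupp.single i 1) f
    rw [h i, hm'] at h3
    simp only [coeff_zero] at h3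
    set m' : Fin n →₀ ℕ := m - Finsupp.single i 1 with hm'def
    have hne : ((m' i : ℕ) : ℝ) + 1 ≠ 0 := by positivity
    rcases mul_eq_zero.mp h3.symm with hc | hc
    · exact absurd hc hne
    · exact hc

/-- Restriction of a multivariate polynomial to the line `t ↦ v + t • b`. -/
noncomputable def lineRestrict (f : MvPolynomial (Fin n) ℝ) (v b : Fin n → ℝ) : Polynomial ℝ :=
  MvPolynomial.aeval (fun i => Polynomial.C (v i) + Polynomial.C (b i) * Polynomial.X) f

lemma lineRestrict_eval (f : MvPolynomial (Fin n) ℝ) (v b : Fin n → ℝ) (t : ℝ) :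
    (lineRestrict f v b).eval t = MvPolynomial.eval (v + t • b) f := by
  rw [lineRestrict, aeval_def, ← Polynomial.coe_evalRingHom, eval₂_comp_left]
  rw [MvPolynomial.eval]
  congr 1
  · ext x
    simp [Polynomial.algebraMap_eq]
  · ext i
    simp [Pi.add_apply, Pi.smul_apply]
    ring

lemma lineRestrict_natDegree_le (f : MvPolynomial (Fin n) ℝ) (v b : Fin n → ℝ) :
    (lineRestrict f v b).natDegree ≤ f.totalDegree := by
  rw [lineRestrict]
  conv_lhs => rw [f.as_sum]
  rw [map_sum]
  apply Polynomial.natDegree_sum_le_of_forall_le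
  intro m hm
  rw [aeval_monomial]
  apply le_trans (Polynomial.natDegree_mul_le)
  have h1 : ((algebraMap ℝ (Polynomial ℝ)) (coeff m f)).natDegree = 0 := by
    rw [Polynomial.algebraMap_eq]; exact Polynomial.natDegree_C _
  rw [h1, zero_add]
  rw [Finsupp.prod_fintype _ _ (fun i => pow_zero _)]
  apply le_trans (Polynomial.natDegree_prod_le _ _)
  calc ∑ i, ((Polynomial.C (v i) + Polynomial.C (b i) * Polynomial.X) ^ m i).natDegree
      ≤ ∑ i, m i * 1 := by
        apply Finset.sum_le_sum
        intro i _
        apply le_trans Polynomial.natDegree_pow_le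
        apply Nat.mul_le_mul_left
        apply le_trans (Polynomial.natDegree_add_le _ _)
        apply max_le (by simp)
        apply le_trans (Polynomial.natDegree_mul_le)
        simp
    _ = m.sum fun _ e => e := by
        rw [Finsupp.sum_fintype]
        · simp
        · intro i; rfl
    _ ≤ f.totalDegree := MvPolynomial.le_totalDegree hm

lemma lineRestrict_derivative (f : MvPolynomial (Fin n) ℝ) (v b : Fin n → ℝ) :
    (lineRestrict f v b).derivative
      = ∑ i, Polynomial.C (b i) * lineRestrict (pderiv i f) v b := by
  induction f using MvPolynomial.induction_on with
  | C a => simp [lineRestrict]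
  | add p q hp hq =>
    simp only [lineRestrict, map_add, Polynomial.derivative_add] at *
    rw [hp, hq, ← Finset.sum_add_distrib]
    exact Finset.sum_congr rfl (fun i _ => by ring)
  | mul_X p i hp =>
    have hmul : lineRestrict (p * X i) v b
        = lineRestrict p v b * (Polynomial.C (v i) + Polynomial.C (b i) * Polynomial.X) := by
      simp [lineRestrict]
    have hder : (Polynomial.C (v i) + Polynomial.C (b i) * Polynomial.X).derivative
        = Polynomial.C (b i) := by simp
    have key : ∀ j : Fin n, Polynomial.C (b j) * lineRestrict (pderiv j (p * X i)) v b
        = Polynomial.C (b j) * lineRestrict (pderiv j p) v b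
            * (Polynomial.C (v i) + Polynomial.C (b i) * Polynomial.X)
          + (if j = i then Polynomial.C (b i) * lineRestrict p v b else 0) := by
      intro j
      rw [pderiv_mul]
      by_cases h : j = i
      · subst h
        rw [if_pos rfl]
        simp only [pderiv_X_self, mul_one, lineRestrict, map_add, map_mul, aeval_X]
        ring
      · rw [pderiv_X_of_ne (Ne.symm h), mul_zero, add_zero, if_neg h, add_zero,
          lineRestrict, lineRestrict, map_mul, aeval_X]
        ring
    rw [hmul, Polynomial.derivative_mul, hp, hder,
      Finset.sum_congr rfl (fun j _ => key j), Finset.sum_add_distrib,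
      Finset.sum_ite_eq' Finset.univ i, if_pos (Finset.mem_univ i), Finset.sum_mul]
    ring

lemma exists_vanishing_poly (S : Finset (Fin n → ℝ)) (k : ℕ) (hS : S.card < (k + 1) ^ n) :
    ∃ f : MvPolynomial (Fin n) ℝ, f ≠ 0 ∧ f.totalDegree ≤ n * k ∧
      ∀ x ∈ S, MvPolynomial.eval x f = 0 := by
  classical
  set σ := Fin n → Fin (k + 1)
  -- the evaluation linear map
  let M : Matrix S σ ℝ := fun x a => ∏ i, (x : Fin n → ℝ) i ^ (a i : ℕ)
  let T : (σ → ℝ) →ₗ[ℝ] (S → ℝ) := M.mulVecLin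
  have hcard : Module.finrank ℝ (S → ℝ) < Module.finrank ℝ (σ → ℝ) := by
    rw [Module.finrank_fintype_fun_eq_card, Module.finrank_fintype_fun_eq_card,
      Fintype.card_coe]
    calc S.card < (k+1)^n := hS
      _ = Fintype.card σ := by simp [σ, Fintype.card_fun]
  have hni : ¬ Function.Injective T := fun h =>
    absurd (LinearMap.finrank_le_finrank_of_injective h) (not_le.mpr hcard)
  rw [← LinearMap.ker_eq_bot] at hni
  obtain ⟨c, hc, hc0⟩ := Submodule.exists_mem_ne_zero_of_ne_bot hni
  -- build the polynomial
  let D : σ → (Fin n →₀ ℕ) := fun a => Finsupp.equivFunOnFinite.symm (fun i => (a i : ℕ))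
  have hDa : ∀ (a : σ) (i : Fin n), (D a) i = (a i : ℕ) := fun a i =>
    Finsupp.equivFunOnFinite_symm_apply_apply _ _
  have hD : Function.Injective D := by
    intro a a' h
    funext i
    have h2 : ((a i : ℕ)) = ((a' i : ℕ)) := by
      rw [← hDa a i, ← hDa a' i, h]
    exact Fin.ext h2
  refine ⟨∑ a : σ, monomial (D a) (c a), ?_, ?_, ?_⟩
  · obtain ⟨a0, ha0⟩ : ∃ a, c a ≠ 0 := by
      by_contra h; push_neg at h; exact hc0 (funext h)
    intro h
    have := congrArg (coeff (D a0)) h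
    rw [coeff_zero, MvPolynomial.coeff_sum] at this
    rw [Finset.sum_eq_single a0] at this
    · rw [coeff_monomial, if_pos rfl] at this; exact ha0 this
    · intro a _ ha
      rw [coeff_monomial, if_neg (fun he => ha (hD he))]
    · intro h; exact absurd (Finset.mem_univ a0) h
  · apply le_trans (totalDegree_finset_sum _ _)
    apply Finset.sup_le
    intro a _
    apply le_trans (totalDegree_monomial_le _ _)
    rw [Finsupp.sum_fintype _ _ (fun i => rfl)]
    calc ∑ i, (D a) i ≤ ∑ _i : Fin n, k := by
          apply Finset.sum_le_sum
          intro i _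
          rw [hDa]
          exact Nat.lt_succ_iff.mp (a i).isLt
      _ = n * k := by simp [Finset.sum_const, Finset.card_univ]
  · intro x hx
    have hTc : T c = 0 := hc
    have := congrFun hTc ⟨x, hx⟩
    rw [MvPolynomial.eval_sum]
    simp only [MvPolynomial.eval_monomial]
    rw [show (0:ℝ) = T c ⟨x, hx⟩ by rw [hTc]; rfl]
    simp only [T, Matrix.mulVecLin_apply, Matrix.mulVec, dotProduct, M]
    apply Finset.sum_congr rfl
    intro a _
    rw [Finsupp.prod_fintype _ _ (fun i => pow_zero _)]
    simp only [hDa]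
    ring

/-- A line through two distinct points is determined by them. -/
lemma line_eq_of_two_mem {l : Set (Fin n → ℝ)} (hl : IsLine l) {x y : Fin n → ℝ}
    (hx : x ∈ l) (hy : y ∈ l) (hxy : x ≠ y) :
    l = {z | ∃ t : ℝ, z = x + t • (y - x)} := by
  obtain ⟨v, b, hb, rfl⟩ := hl
  obtain ⟨s, rfl⟩ := hx
  obtain ⟨u, rfl⟩ := hy
  have hsu : u - s ≠ 0 := by
    intro h
    apply hxy
    have : s = u := by linarith [sub_eq_zero.mp h]
    rw [this]
  ext z
  simp only [Set.mem_setOf_eq]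
  constructor
  · rintro ⟨t, rfl⟩
    refine ⟨(t - s) / (u - s), ?_⟩
    have h1 : ((t - s) / (u - s)) * (u - s) = t - s := div_mul_cancel₀ _ hsu
    have : v + t • b = (v + s • b) + ((t - s) / (u - s)) • ((v + u • b) - (v + s • b)) := by
      have hexp : (v + u • b) - (v + s • b) = (u - s) • b := by module
      rw [hexp, smul_smul, h1]
      module
    exact this
  · rintro ⟨r, rfl⟩
    refine ⟨s + r * (u - s), ?_⟩
    module

/-- Two direction vectors for the same line are proportional. -/
lemma dir_proportional {v b v' b' : Fin n → ℝ}
    (h : {y : Fin n → ℝ | ∃ t : ℝ, y = v + t • b} = {y | ∃ t : ℝ, y = v' + t • b'}) :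
    ∃ r : ℝ, b' = r • b := by
  have h1 : v' ∈ {y : Fin n → ℝ | ∃ t : ℝ, y = v + t • b} := by
    rw [h]; exact ⟨0, by simp⟩
  have h2 : v' + b' ∈ {y : Fin n → ℝ | ∃ t : ℝ, y = v + t • b} := by
    rw [h]; exact ⟨1, by simp⟩
  obtain ⟨t0, ht0⟩ := h1
  obtain ⟨t1, ht1⟩ := h2
  refine ⟨t1 - t0, ?_⟩
  have : v' + b' - v' = (v + t1 • b) - (v + t0 • b) := by rw [← ht0, ← ht1]
  simpa [sub_smul] using this.trans (by module)

lemma finrank_pi_fin : Module.finrank ℝ (Fin n → ℝ) = n := by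
  simp [Module.finrank_fintype_fun_eq_card]

/-- Every joint lies on two distinct lines of the collection. -/
lemma exists_two_lines (hn : 2 ≤ n) {L : Finset (Set (Fin n → ℝ))} {x : Fin n → ℝ}
    (hx : x ∈ jointSet L) :
    ∃ l1 l2 : Set (Fin n → ℝ), l1 ∈ L ∧ l2 ∈ L ∧ l1 ≠ l2 ∧ x ∈ l1 ∧ x ∈ l2 := by
  classical
  set D := {b : Fin n → ℝ | b ≠ 0 ∧ ∃ l ∈ L, x ∈ l ∧ ∃ v, l = {y | ∃ t : ℝ, y = v + t • b}}
    with hD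
  have hspan : Submodule.span ℝ D = ⊤ := hx
  obtain ⟨b0, hb0⟩ : D.Nonempty := by
    rw [Set.nonempty_iff_ne_empty]
    intro hDe
    rw [hDe, Submodule.span_empty] at hspan
    have h1 : Module.finrank ℝ (⊥ : Submodule ℝ (Fin n → ℝ)) = 0 := finrank_bot ℝ _
    have h2 : Module.finrank ℝ (⊤ : Submodule ℝ (Fin n → ℝ)) = n := by
      rw [finrank_top, finrank_pi_fin]
    rw [hspan, h2] at h1
    omega
  obtain ⟨hb0ne, l0, hl0L, hxl0, v0, hl0⟩ := hb0
  by_cases hone : ∀ b ∈ D, ∀ l ∈ L, x ∈ l → (∃ v, l = {y | ∃ t : ℝ, y = v + t • b}) → l = l0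
  · -- all lines through x equal l0, so D ⊆ span {b0}, contradiction
    exfalso
    have hsub : D ⊆ (Submodule.span ℝ {b0} : Submodule ℝ (Fin n → ℝ)) := by
      rintro b ⟨hbne, l, hlL, hxl, v, hl⟩
      have hll0 : l = l0 := hone b ⟨hbne, l, hlL, hxl, v, hl⟩ l hlL hxl ⟨v, hl⟩
      subst hll0
      obtain ⟨r, rfl⟩ := dir_proportional (hl0.symm.trans hl)
      exact Submodule.smul_mem _ r (Submodule.mem_span_singleton_self b0)
    have hle : (⊤ : Submodule ℝ (Fin n → ℝ)) ≤ Submodule.span ℝ {b0} := by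
      rw [← hspan]; exact Submodule.span_le.mpr hsub
    have h1 : Module.finrank ℝ (⊤ : Submodule ℝ (Fin n → ℝ))
        ≤ Module.finrank ℝ (Submodule.span ℝ {b0}) := Submodule.finrank_mono hle
    rw [finrank_top, finrank_pi_fin, finrank_span_singleton hb0ne] at h1
    omega
  · push_neg at hone
    obtain ⟨b, _, l, hlL, hxl, hrep, hll0⟩ := hone
    exact ⟨l, l0, hlL, hl0L, hll0, hxl, hxl0⟩

lemma jointSet_finite (hn : 2 ≤ n) {L : Finset (Set (Fin n → ℝ))}
    (hL : ∀ l ∈ L, IsLine l) : (jointSet L).Finite := by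
  classical
  set P : (Fin n → ℝ) → Prop := fun x =>
    ∃ p : Set (Fin n → ℝ) × Set (Fin n → ℝ),
      p.1 ∈ L ∧ p.2 ∈ L ∧ p.1 ≠ p.2 ∧ x ∈ p.1 ∧ x ∈ p.2 with hP
  have hPall : ∀ x ∈ jointSet L, P x := by
    intro x hx
    obtain ⟨l1, l2, h1, h2, h12, hx1, hx2⟩ := exists_two_lines hn hx
    exact ⟨(l1, l2), h1, h2, h12, hx1, hx2⟩
  set F : (Fin n → ℝ) → Set (Fin n → ℝ) × Set (Fin n → ℝ) := fun x =>
    if h : P x then h.choose else (∅, ∅) with hF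
  apply Set.Finite.of_finite_image (f := F)
  · apply Set.Finite.subset (Set.Finite.prod L.finite_toSet L.finite_toSet)
    rintro p ⟨x, hx, rfl⟩
    have h := hPall x hx
    rw [hF]
    simp only [dif_pos h]
    exact ⟨h.choose_spec.1, h.choose_spec.2.1⟩
  · intro x hx y hy hxy
    by_contra hne
    have hx' := hPall x hx
    have hy' := hPall y hy
    rw [hF] at hxy
    simp only [dif_pos hx', dif_pos hy'] at hxy
    obtain ⟨h1x, h2x, h12x, hxx1, hxx2⟩ := hx'.choose_spec
    obtain ⟨h1y, h2y, h12y, hyy1, hyy2⟩ := hy'.choose_spec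
    rw [hxy] at hxx1 hxx2
    -- now the two distinct lines hy'.choose.1, hy'.choose.2 both contain x and y
    have e1 := line_eq_of_two_mem (hL _ h1y) hxx1 hyy1 hne
    have e2 := line_eq_of_two_mem (hL _ h2y) hxx2 hyy2 hne
    exact h12y (e1.trans e2.symm)

/-- Degrees `d` such that some nonzero polynomial of total degree at most `d` vanishes on `S`. -/
def vanishDegSet (S : Set (Fin n → ℝ)) : Set ℕ :=
  {d | ∃ f : MvPolynomial (Fin n) ℝ, f ≠ 0 ∧ f.totalDegree ≤ d ∧
    ∀ x ∈ S, MvPolynomial.eval x f = 0}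

noncomputable def minDeg (S : Set (Fin n → ℝ)) : ℕ := sInf (vanishDegSet S)

lemma vanishDegSet_nonempty (hn : 1 ≤ n) {S : Set (Fin n → ℝ)} (hS : S.Finite) :
    (vanishDegSet S).Nonempty := by
  obtain ⟨f, hf0, hfd, hfv⟩ := exists_vanishing_poly hS.toFinset hS.toFinset.card
    (by
      calc hS.toFinset.card < hS.toFinset.card + 1 := Nat.lt_succ_self _
        _ = (hS.toFinset.card + 1) ^ 1 := (pow_one _).symm
        _ ≤ (hS.toFinset.card + 1) ^ n := Nat.pow_le_pow_right (Nat.succ_le_succ (Nat.zero_le _)) hn)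
  exact ⟨n * hS.toFinset.card, f, hf0, hfd, fun x hx => hfv x (hS.mem_toFinset.mpr hx)⟩

lemma minDeg_mem (hn : 1 ≤ n) {S : Set (Fin n → ℝ)} (hS : S.Finite) :
    minDeg S ∈ vanishDegSet S := Nat.sInf_mem (vanishDegSet_nonempty hn hS)

lemma minDeg_le {S : Set (Fin n → ℝ)} {d : ℕ} (h : d ∈ vanishDegSet S) : minDeg S ≤ d :=
  Nat.sInf_le h

lemma vanishDegSet_anti {S S' : Set (Fin n → ℝ)} (h : S' ⊆ S) :
    vanishDegSet S ⊆ vanishDegSet S' := by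
  rintro d ⟨f, h0, hd, hv⟩
  exact ⟨f, h0, hd, fun x hx => hv x (h hx)⟩

lemma minDeg_mono (hn : 1 ≤ n) {S S' : Set (Fin n → ℝ)} (h : S' ⊆ S) (hS : S.Finite) :
    minDeg S' ≤ minDeg S :=
  minDeg_le (vanishDegSet_anti h (minDeg_mem hn hS))

lemma eq_C_of_totalDegree_eq_zero {f : MvPolynomial (Fin n) ℝ} (h : f.totalDegree = 0) :
    f = C (coeff 0 f) := by
  ext m
  by_cases hm : m = 0
  · subst hm; simp
  · rw [coeff_C, if_neg (Ne.symm hm)]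
    by_contra hc
    have hm2 := (totalDegree_eq_zero_iff _ f).mp h m (mem_support_iff.mpr hc)
    exact hm (Finsupp.ext (fun j => hm2 j))

lemma minDeg_pos (hn : 1 ≤ n) {S : Set (Fin n → ℝ)} (hS : S.Finite) (hne : S.Nonempty) :
    1 ≤ minDeg S := by
  by_contra h
  push_neg at h
  obtain ⟨f, h0, hd, hv⟩ := minDeg_mem hn hS
  have hd0 : f.totalDegree = 0 := by omega
  obtain ⟨x, hx⟩ := hne
  have hC := eq_C_of_totalDegree_eq_zero hd0
  have h2 := hv x hx
  rw [hC, eval_C] at h2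
  rw [hC, h2, map_zero] at h0
  exact h0 rfl

lemma exists_line_few_joints (hn : 2 ≤ n) (L : Finset (Set (Fin n → ℝ)))
    (hL : ∀ l ∈ L, IsLine l) (hne : (jointSet L).Nonempty) :
    ∃ l ∈ L, (jointSet L ∩ l).ncard ≤ minDeg (jointSet L) := by
  classical
  have hn1 : 1 ≤ n := le_trans (by norm_num) hn
  have hfin : (jointSet L).Finite := jointSet_finite hn hL
  obtain ⟨f, hf0, hfd, hfv⟩ := minDeg_mem hn1 hfin
  by_contra hcon
  push_neg at hcon
  -- Step A : f vanishes identically on every line of L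
  have stepA : ∀ l ∈ L, ∀ y ∈ l, MvPolynomial.eval y f = 0 := by
    intro l hlL y hy
    obtain ⟨v, b, hb, rfl⟩ := hL l hlL
    have hsub : (jointSet L ∩ {x | ∃ t : ℝ, x = v + t • b}).Finite := hfin.inter_of_left _
    have hcard : minDeg (jointSet L) < hsub.toFinset.card := by
      rw [← Set.ncard_eq_toFinset_card _ hsub]
      exact hcon _ hlL
    have hmem : ∀ x : hsub.toFinset, ∃ t : ℝ, (x : Fin n → ℝ) = v + t • b := by
      intro x
      have h2 := x.2
      rw [Set.Finite.mem_toFinset] at h2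
      exact h2.2
    set τ : hsub.toFinset → ℝ := fun x => (hmem x).choose with hτ
    have hτs : ∀ x : hsub.toFinset, (x : Fin n → ℝ) = v + τ x • b :=
      fun x => (hmem x).choose_spec
    have hτinj : Function.Injective τ := by
      intro x x' h
      apply Subtype.ext
      rw [show (x : Fin n → ℝ) = v + τ x • b from hτs x, hτs x', h]
    have hg : lineRestrict f v b = 0 := by
      apply Polynomial.eq_zero_of_natDegree_lt_card_of_eval_eq_zero _ hτinj
      · intro x
        rw [lineRestrict_eval, ← hτs x]
        have h2 := x.2
        rw [Set.Finite.mem_toFinset] at h2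
        exact hfv _ h2.1
      · rw [Fintype.card_coe]
        exact lt_of_le_of_lt (le_trans (lineRestrict_natDegree_le f v b) hfd) hcard
    obtain ⟨t, rfl⟩ := hy
    rw [← lineRestrict_eval, hg, Polynomial.eval_zero]
  -- Step B : all partial derivatives vanish on the joints
  have stepB : ∀ x ∈ jointSet L, ∀ i, MvPolynomial.eval x (pderiv i f) = 0 := by
    intro x hx i
    set ψ : (Fin n → ℝ) →ₗ[ℝ] ℝ :=
      ∑ j, MvPolynomial.eval x (pderiv j f) • (LinearMap.proj j : (Fin n → ℝ) →ₗ[ℝ] ℝ)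
      with hψ
    have hψapp : ∀ w : Fin n → ℝ, ψ w = ∑ j, MvPolynomial.eval x (pderiv j f) * w j := by
      intro w
      rw [hψ]
      simp [LinearMap.sum_apply, LinearMap.smul_apply, LinearMap.proj_apply, smul_eq_mul]
    have hker : {b' : Fin n → ℝ | b' ≠ 0 ∧ ∃ l ∈ L, x ∈ l ∧
        ∃ v, l = {y | ∃ t : ℝ, y = v + t • b'}} ⊆ (LinearMap.ker ψ : Set (Fin n → ℝ)) := by
      rintro b' ⟨hb', l, hlL, hxl, v', hl⟩
      subst hl
      have hvan : ∀ t : ℝ, Polynomial.eval t (lineRestrict f v' b') = 0 := by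
        intro t
        rw [lineRestrict_eval]
        exact stepA _ hlL _ ⟨t, rfl⟩
      have h0 : lineRestrict f v' b' = 0 := by
        apply Polynomial.funext
        intro r
        rw [Polynomial.eval_zero]
        exact hvan r
      have hder := lineRestrict_derivative f v' b'
      rw [h0, Polynomial.derivative_zero] at hder
      obtain ⟨t, hxt⟩ := hxl
      have h2 := congrArg (Polynomial.eval t) hder.symm
      rw [Polynomial.eval_zero, Polynomial.eval_finset_sum] at h2
      simp only [Polynomial.eval_mul, Polynomial.eval_C, lineRestrict_eval] at h2
      rw [← hxt] at h2
      rw [SetLike.mem_coe, LinearMap.mem_ker, hψapp]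
      rw [show ∑ j, MvPolynomial.eval x (pderiv j f) * b' j
          = ∑ j, b' j * MvPolynomial.eval x (pderiv j f) from
        Finset.sum_congr rfl (fun j _ => mul_comm _ _)]
      exact h2
    have hsp : Submodule.span ℝ {b' : Fin n → ℝ | b' ≠ 0 ∧ ∃ l ∈ L, x ∈ l ∧
        ∃ v, l = {y | ∃ t : ℝ, y = v + t • b'}} = ⊤ := hx
    have hψ0 : ψ = 0 := by
      apply LinearMap.ker_eq_top.mp
      apply le_antisymm le_top
      rw [← hsp]
      exact Submodule.span_le.mpr hker
    have h3 : ψ (Pi.single i 1) = 0 := by rw [hψ0]; rfl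
    rw [hψapp] at h3
    have h4 : ∑ j, MvPolynomial.eval x (pderiv j f) * Pi.single (M := fun _ : Fin n => ℝ) i 1 j
        = MvPolynomial.eval x (pderiv i f) := by
      rw [Finset.sum_eq_single i]
      · simp
      · intro j _ hji
        rw [Pi.single_eq_of_ne hji, mul_zero]
      · intro hni; exact absurd (Finset.mem_univ i) hni
    rw [h4] at h3
    exact h3
  -- Step C : contradiction with minimality
  by_cases hallz : ∀ i, pderiv i f = 0
  · have hC := eq_C_of_pderiv_eq_zero hallz
    obtain ⟨x0, hx0⟩ := hne
    have h2 := hfv x0 hx0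
    rw [hC, eval_C] at h2
    rw [hC, h2, map_zero] at hf0
    exact hf0 rfl
  · push_neg at hallz
    obtain ⟨i, hi⟩ := hallz
    have hd1 : 1 ≤ minDeg (jointSet L) := minDeg_pos hn1 hfin hne
    have hmem2 : (minDeg (jointSet L) - 1) ∈ vanishDegSet (jointSet L) := by
      refine ⟨pderiv i f, hi, ?_, fun x hx => stepB x hx i⟩
      apply totalDegree_pderiv_le
      omega
    have := minDeg_le hmem2
    omega

lemma jointSet_mono {L L' : Finset (Set (Fin n → ℝ))} (h : L' ⊆ L) :
    jointSet L' ⊆ jointSet L := by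
  intro x hx
  have hsp : Submodule.span ℝ {b : Fin n → ℝ | b ≠ 0 ∧ ∃ l ∈ L', x ∈ l ∧
      ∃ v, l = {y | ∃ t : ℝ, y = v + t • b}} = ⊤ := hx
  show Submodule.span ℝ _ = ⊤
  apply le_antisymm le_top
  rw [← hsp]
  apply Submodule.span_mono
  rintro b ⟨h0, l, hl, rest⟩
  exact ⟨h0, l, h hl, rest⟩

lemma jointSet_erase {L : Finset (Set (Fin n → ℝ))} {l : Set (Fin n → ℝ)} :
    jointSet L \ l ⊆ jointSet (L.erase l) := by
  classical
  rintro x ⟨hx, hxl⟩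
  have hsp : Submodule.span ℝ {b : Fin n → ℝ | b ≠ 0 ∧ ∃ l' ∈ L, x ∈ l' ∧
      ∃ v, l' = {y | ∃ t : ℝ, y = v + t • b}} = ⊤ := hx
  show Submodule.span ℝ _ = ⊤
  apply le_antisymm le_top
  rw [← hsp]
  apply Submodule.span_mono
  rintro b ⟨h0, l', hl', hxl', rest⟩
  refine ⟨h0, l', Finset.mem_erase.mpr ⟨?_, hl'⟩, hxl', rest⟩
  rintro rfl
  exact hxl hxl'

lemma joint_card_le (hn : 2 ≤ n) :
    ∀ (m : ℕ) (L : Finset (Set (Fin n → ℝ))), L.card = m → (∀ l ∈ L, IsLine l) →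
    (jointSet L).ncard ≤ minDeg (jointSet L) * L.card := by
  intro m
  induction m using Nat.strong_induction_on with
  | _ m ih =>
    intro L hm hL
    classical
    have hn1 : 1 ≤ n := by omega
    rcases Set.eq_empty_or_nonempty (jointSet L) with he | hne
    · rw [he]; simp
    · obtain ⟨l, hlL, hl⟩ := exists_line_few_joints hn L hL hne
      set L' := L.erase l with hL'def
      have hL' : ∀ l' ∈ L', IsLine l' := fun l' h => hL l' (Finset.mem_of_mem_erase h)
      have hm1 : 1 ≤ m := by
        rw [← hm]; exact Finset.card_pos.mpr ⟨l, hlL⟩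
      have hcard' : L'.card = m - 1 := by
        rw [hL'def, Finset.card_erase_of_mem hlL, hm]
      have ihL' := ih (m-1) (by omega) L' hcard' hL'
      have hsplit : (jointSet L).ncard ≤ (jointSet L ∩ l).ncard + (jointSet L \ l).ncard := by
        conv_lhs => rw [← Set.inter_union_diff (jointSet L) l]
        exact Set.ncard_union_le _ _
      have h2 : (jointSet L \ l).ncard ≤ (jointSet L').ncard :=
        Set.ncard_le_ncard jointSet_erase (jointSet_finite hn hL')
      have h3 : minDeg (jointSet L') ≤ minDeg (jointSet L) :=
        minDeg_mono hn1 (jointSet_mono (Finset.erase_subset l L))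
          (jointSet_finite hn hL)
      have h4 : (jointSet L).ncard
          ≤ minDeg (jointSet L) + minDeg (jointSet L) * (m - 1) := by
        calc (jointSet L).ncard ≤ (jointSet L ∩ l).ncard + (jointSet L \ l).ncard := hsplit
          _ ≤ minDeg (jointSet L) + (jointSet L').ncard := Nat.add_le_add hl h2
          _ ≤ minDeg (jointSet L) + minDeg (jointSet L') * L'.card := by
              exact Nat.add_le_add_left ihL' _
          _ ≤ minDeg (jointSet L) + minDeg (jointSet L) * (m - 1) := by
              apply Nat.add_le_add_left
              rw [hcard']
              exact Nat.mul_le_mul_right _ h3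
      calc (jointSet L).ncard ≤ minDeg (jointSet L) + minDeg (jointSet L) * (m - 1) := h4
        _ = minDeg (jointSet L) * (1 + (m - 1)) := by ring
        _ = minDeg (jointSet L) * L.card := by
            rw [hm]
            congr 1
            omega

theorem stmt10 (n : ℕ) (hn : 2 ≤ n) :
    ∃ c : ℝ, ∀ L : Finset (Set (Fin n → ℝ)), (∀ l ∈ L, IsLine l) →
      (jointSet L).Finite ∧
      (Nat.card (jointSet L) : ℝ) ≤ c * (L.card : ℝ) ^ ((n : ℝ) / ((n : ℝ) - 1)) := by
  have hn2 : (2:ℝ) ≤ (n:ℝ) := by exact_mod_cast hn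
  have hn0 : (n:ℝ) ≠ 0 := by linarith
  have hn1 : (0:ℝ) < (n:ℝ) - 1 := by linarith
  have hn1' : (n:ℝ) - 1 ≠ 0 := ne_of_gt hn1
  set α : ℝ := (n:ℝ) / ((n:ℝ) - 1) with hα
  have hαpos : 0 < α := div_pos (by linarith) hn1
  refine ⟨(n:ℝ) ^ α, ?_⟩
  intro L hL
  have hfin : (jointSet L).Finite := jointSet_finite hn hL
  refine ⟨hfin, ?_⟩
  rw [Nat.card_coe_set_eq]
  set m := (jointSet L).ncard with hm
  rcases Nat.eq_zero_or_pos m with h0 | hmpos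
  · rw [h0]
    push_cast
    positivity
  -- choose k
  have hmR : (0:ℝ) < (m:ℝ) := by exact_mod_cast hmpos
  set β : ℝ := ((n:ℝ))⁻¹ with hβ
  have hβpos : 0 < β := by positivity
  set k : ℕ := ⌊(m:ℝ) ^ β⌋₊ with hk
  have hBnn : (0:ℝ) ≤ (m:ℝ) ^ β := Real.rpow_nonneg (le_of_lt hmR) _
  have hpow : ((m:ℝ) ^ β) ^ (n:ℕ) = (m:ℝ) := by
    rw [← Real.rpow_natCast ((m:ℝ) ^ β) n, ← Real.rpow_mul (le_of_lt hmR),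
      hβ, inv_mul_cancel₀ hn0, Real.rpow_one]
  have hklt : m < (k + 1) ^ n := by
    have h1 : (m:ℝ) ^ β < (k:ℝ) + 1 := Nat.lt_floor_add_one _
    have h2 : ((m:ℝ) ^ β) ^ (n:ℕ) < ((k:ℝ) + 1) ^ (n:ℕ) := by
      apply pow_lt_pow_left₀ h1 hBnn
      omega
    rw [hpow] at h2
    have : (m:ℝ) < (((k+1:ℕ)):ℝ) ^ (n:ℕ) := by push_cast; push_cast at h2; linarith
    exact_mod_cast this
  have hkle : (k:ℝ) ≤ (m:ℝ) ^ β := Nat.floor_le hBnn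
  -- minimal degree bound
  have hminle : minDeg (jointSet L) ≤ n * k := by
    apply minDeg_le
    have hcard : hfin.toFinset.card = m := (Set.ncard_eq_toFinset_card _ hfin).symm
    obtain ⟨f, h1, h2, h3⟩ := exists_vanishing_poly hfin.toFinset k (by rw [hcard]; exact hklt)
    exact ⟨f, h1, h2, fun x hx => h3 x (hfin.mem_toFinset.mpr hx)⟩
  have hcount : m ≤ n * k * L.card := by
    calc m ≤ minDeg (jointSet L) * L.card := joint_card_le hn L.card L rfl hL
      _ ≤ n * k * L.card := Nat.mul_le_mul_right _ hminle
  have hcountR : (m:ℝ) ≤ (n:ℝ) * ((m:ℝ) ^ β) * (L.card:ℝ) := by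
    have h1 : (m:ℝ) ≤ (n:ℝ) * (k:ℝ) * (L.card:ℝ) := by exact_mod_cast hcount
    apply le_trans h1
    apply mul_le_mul_of_nonneg_right _ (Nat.cast_nonneg _)
    apply mul_le_mul_of_nonneg_left hkle (by positivity)
  -- derive the final bound
  set Lc : ℝ := (L.card : ℝ) with hLc
  have hLcnn : (0:ℝ) ≤ Lc := Nat.cast_nonneg _
  have hBpos : (0:ℝ) < (m:ℝ) ^ β := Real.rpow_pos_of_pos hmR _
  have key : (m:ℝ) ^ (1 - β) ≤ (n:ℝ) * Lc := by
    rw [← mul_le_mul_iff_left₀ hBpos]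
    calc (m:ℝ) ^ (1 - β) * (m:ℝ) ^ β = (m:ℝ) ^ ((1 - β) + β) :=
          (Real.rpow_add hmR _ _).symm
      _ = (m:ℝ) := by rw [sub_add_cancel, Real.rpow_one]
      _ ≤ (n:ℝ) * ((m:ℝ) ^ β) * Lc := hcountR
      _ = (n:ℝ) * Lc * (m:ℝ) ^ β := by ring
  have hfinal : (m:ℝ) ≤ ((n:ℝ) * Lc) ^ α := by
    have h1 : ((m:ℝ) ^ (1 - β)) ^ α ≤ ((n:ℝ) * Lc) ^ α :=
      Real.rpow_le_rpow (Real.rpow_nonneg (le_of_lt hmR) _) key (le_of_lt hαpos)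
    rwa [← Real.rpow_mul (le_of_lt hmR), show (1 - β) * α = 1 by
      rw [hβ, hα]; field_simp, Real.rpow_one] at h1
  calc (m:ℝ) ≤ ((n:ℝ) * Lc) ^ α := hfinal
    _ = (n:ℝ) ^ α * Lc ^ α := Real.mul_rpow (by positivity) hLcnn
end
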